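/- Let n ≥ 1, let R be a commutative ring, and let θ_0, θ_1, …, θ_n ∈ R. Let K(θ) be the n×n symmetric matrix with rows and columns indexed by {1,…,n}, with entries K(θ)_{ii} = θ_i · ∑_{t ∈ {0,…,n}, t ≠ i} θ_t and K(θ)_{ij} = −θ_i θ_j for i ≠ j. Then det K(θ) = (∏_{i=0}^n θ_i) · (∑_{i=0}^n θ_i)^{n−1}. -/
import Mathlib

open Matrix Finset

lemma aux_field {n : ℕ} (hn : 1 ≤ n) {F : Type*} [Field F] (s : F) (hs : s ≠ 0)
    (v : Fin n → F) :
    (Matrix.of fun i j : Fin n => (if i = j then s else 0) - v j).det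
      = s ^ (n - 1) * (s - ∑ i, v i) := by
  have hM : (Matrix.of fun i j : Fin n => (if i = j then s else 0) - v j)
      = s • (1 + Matrix.replicateCol Unit (fun _ => (-1 : F)) * Matrix.replicateRow Unit (s⁻¹ • v)) := by
    ext i j
    simp only [Matrix.of_apply, Matrix.smul_apply, Matrix.add_apply, Matrix.one_apply,
      Matrix.mul_apply, Matrix.replicateCol_apply, Matrix.replicateRow_apply, Finset.univ_unique,
      Finset.sum_singleton, Pi.smul_apply, smul_eq_mul]
    split <;> field_simp <;> ring
  rw [hM, Matrix.det_smul, Matrix.det_one_add_replicateCol_mul_replicateRow]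
  obtain ⟨m, rfl⟩ : ∃ m, n = m + 1 := ⟨n - 1, (Nat.succ_pred_eq_of_pos hn).symm⟩
  simp only [Fintype.card_fin, Nat.add_sub_cancel, dotProduct, Pi.smul_apply, smul_eq_mul]
  have h1 : (∑ x : Fin (m+1), s⁻¹ * v x * -1) = -(∑ x : Fin (m+1), v x) * s⁻¹ := by
    rw [← Finset.sum_mul, ← Finset.mul_sum]
    ring
  rw [h1]
  field_simp
  ring

lemma aux_ring {n : ℕ} (hn : 1 ≤ n) {R : Type*} [CommRing R] (s : R) (v : Fin n → R) :
    (Matrix.of fun i j : Fin n => (if i = j then s else 0) - v j).det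
      = s ^ (n - 1) * (s - ∑ i, v i) := by
  set P := MvPolynomial (Fin (n + 1)) ℤ
  set F := FractionRing P
  have hinj : Function.Injective (algebraMap P F) := IsFractionRing.injective P F
  have key : (Matrix.of fun i j : Fin n =>
      (if i = j then MvPolynomial.X (0 : Fin (n+1)) else 0) - MvPolynomial.X j.succ : Matrix (Fin n) (Fin n) P).det
      = (MvPolynomial.X 0) ^ (n - 1) * (MvPolynomial.X 0 - ∑ i : Fin n, MvPolynomial.X i.succ) := by
    apply hinj
    have hs : algebraMap P F (MvPolynomial.X 0) ≠ 0 := by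
      rw [map_ne_zero_iff _ hinj]
      exact MvPolynomial.X_ne_zero _
    have h := aux_field hn _ hs (fun i : Fin n => algebraMap P F (MvPolynomial.X i.succ))
    rw [RingHom.map_det, _root_.map_mul, map_pow, map_sub, map_sum, ← h]
    congr 1
    ext i j
    simp [RingHom.mapMatrix_apply, Matrix.map_apply, apply_ite (algebraMap P F)]
  let φ : P →+* R := (MvPolynomial.eval₂Hom (Int.castRingHom R) (Fin.cases s v))
  have h2 := congrArg φ key
  rw [RingHom.map_det, _root_.map_mul, map_pow, map_sub, map_sum] at h2
  have hφ0 : φ (MvPolynomial.X 0) = s := by rw [MvPolynomial.eval₂Hom_X']; exact Fin.cases_zero ..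
  have hφs : ∀ i : Fin n, φ (MvPolynomial.X i.succ) = v i := by
    intro i; rw [MvPolynomial.eval₂Hom_X']; exact Fin.cases_succ ..
  simp only [hφ0, hφs] at h2
  rw [← h2]
  congr 1
  ext i j
  simp [RingHom.mapMatrix_apply, Matrix.map_apply, apply_ite φ, hφ0, hφs]

theorem star_tree_det {n : ℕ} (hn : 1 ≤ n) {R : Type*} [CommRing R]
    (θ : Fin (n + 1) → R) :
    (Matrix.of fun i j : Fin n =>
      if i = j then θ i.succ * ∑ t ∈ Finset.univ.erase i.succ, θ t
      else -(θ i.succ * θ j.succ)).det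
    = (∏ i, θ i) * (∑ i, θ i) ^ (n - 1) := by
  set S := ∑ i, θ i with hS
  have hfac : (Matrix.of fun i j : Fin n =>
      if i = j then θ i.succ * ∑ t ∈ Finset.univ.erase i.succ, θ t
      else -(θ i.succ * θ j.succ))
      = (Matrix.diagonal fun i : Fin n => θ i.succ) *
        (Matrix.of fun i j : Fin n => (if i = j then S else 0) - θ j.succ) := by
    ext i j
    rw [Matrix.diagonal_mul]
    simp only [Matrix.of_apply]
    split_ifs with h
    · subst h
      rw [Finset.sum_erase_eq_sub (Finset.mem_univ i.succ), ← hS]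
    · ring
  rw [hfac, Matrix.det_mul, Matrix.det_diagonal, aux_ring hn]
  have h0 : S - ∑ i : Fin n, θ i.succ = θ 0 := by
    rw [hS, Fin.sum_univ_succ]; ring
  rw [h0, Fin.prod_univ_succ]
  ring
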